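/- arXiv:2601.10424 — 4 statements merged into one kernel-verified Lean document; each statement's English description precedes it below -/
import Mathlib

section
/- Let B_{ij} ∈ M₂(ℂ) (1 ≤ i,j ≤ 2) satisfy: (i) Σ_{i,j=1}^{2} ξ^i·conj(ξ^j)·B_{ij} is positive definite for every nonzero ξ ∈ ℂ²; (ii) B_{11} + B_{22} = 2·I; (iii) tr(B_{ij}) = 2·δ_{ij}. Then Φ := D(B_{11}, B_{22}) − D(B_{12}, B_{21}) ≥ 1. -/
open scoped BigOperators ComplexOrder

noncomputable section

/-- The mixed discriminant of two `2 × 2` complex matrices: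
`D(X,Y) = (tr X · tr Y − tr(XY))/2`. -/
def mixedDisc2 (X Y : Matrix (Fin 2) (Fin 2) ℂ) : ℂ :=
  (Matrix.trace X * Matrix.trace Y - Matrix.trace (X * Y)) / 2

/-- if `B i j ∈ M₂(ℂ)` satisfy
(i) `∑ i j, ξ i conj (ξ j) • B i j ≻ 0` for every nonzero `ξ ∈ ℂ²`,
(ii) `B₁₁ + B₂₂ = 2 I`, and (iii) `tr (B i j) = 2 δ_{ij}`, then
`Φ = D(B₁₁, B₂₂) − D(B₁₂, B₂₁) ≥ 1` (and `Φ` is real). -/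
theorem stmt12 (B : Fin 2 → Fin 2 → Matrix (Fin 2) (Fin 2) ℂ)
    (hpos : ∀ ξ : Fin 2 → ℂ, ξ ≠ 0 →
      (∑ i : Fin 2, ∑ j : Fin 2, (ξ i * (starRingEnd ℂ) (ξ j)) • B i j).PosDef)
    (hsum : B 0 0 + B 1 1 = (2 : ℂ) • (1 : Matrix (Fin 2) (Fin 2) ℂ))
    (htr : ∀ i j : Fin 2, Matrix.trace (B i j) = if i = j then (2 : ℂ) else 0) :
    (mixedDisc2 (B 0 0) (B 1 1) - mixedDisc2 (B 0 1) (B 1 0)).im = 0 ∧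
    1 ≤ (mixedDisc2 (B 0 0) (B 1 1) - mixedDisc2 (B 0 1) (B 1 0)).re := by
  have h0 := (hpos ![1,0] (by intro h; simpa using congrFun h 0)).isHermitian
  have h1 := (hpos ![1,1] (by intro h; simpa using congrFun h 0)).isHermitian
  have h2 := (hpos ![1,Complex.I] (by intro h; simpa using congrFun h 0)).isHermitian
  simp [Fin.sum_univ_two, Complex.conj_I] at h0 h1 h2
  -- entrywise facts
  have e0 : ∀ i j, (starRingEnd ℂ) (B 0 0 j i) = B 0 0 i j := fun i j => h0.apply i j
  have e11 : ∀ i j, B 1 1 i j = (2:ℂ) • (1 : Matrix (Fin 2) (Fin 2) ℂ) i j - B 0 0 i j := by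
    intro i j
    have := congrFun (congrFun hsum i) j
    simp only [Matrix.add_apply, Matrix.smul_apply, smul_eq_mul] at this
    linear_combination this
  have e11h : ∀ i j, (starRingEnd ℂ) (B 1 1 j i) = B 1 1 i j := by
    intro i j
    rw [e11, e11, map_sub, e0, sub_left_inj]
    fin_cases i <;> fin_cases j <;> simp [Matrix.one_apply] <;> exact map_ofNat _ 2
  have e10 : ∀ i j, B 1 0 i j = (starRingEnd ℂ) (B 0 1 j i) := by
    intro i j
    have t1 := h1.apply i j
    have t2 := h2.apply i j
    simp only [Matrix.add_apply, Matrix.neg_apply, Matrix.smul_apply, smul_eq_mul,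
      star_add, star_neg, star_mul', Complex.star_def, Complex.conj_I, e0, e11h] at t1 t2
    rw [Complex.ext_iff] at t1 t2 ⊢
    simp only [Complex.add_re, Complex.add_im, Complex.neg_re, Complex.neg_im,
      Complex.mul_re, Complex.mul_im, Complex.I_re, Complex.I_im,
      Complex.conj_re, Complex.conj_im] at t1 t2 ⊢
    obtain ⟨t1r, t1i⟩ := t1
    obtain ⟨t2r, t2i⟩ := t2
    constructor <;> linarith
  -- diagonal of B00
  set a : ℝ := (B 0 0 0 0).re with ha
  have h00 : B 0 0 0 0 = (a : ℂ) := (Complex.conj_eq_iff_re.mp (e0 0 0)).symm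
  have h11d : B 0 0 1 1 = 2 - (a : ℂ) := by
    have := htr 0 0
    simp [Matrix.trace_fin_two] at this
    linear_combination this - h00
  have h0010 : B 0 0 1 0 = (starRingEnd ℂ) (B 0 0 0 1) := (e0 1 0).symm
  have htr01 : B 0 1 1 1 = - B 0 1 0 0 := by
    have := htr 0 1
    simp [Matrix.trace_fin_two] at this
    linear_combination this
  have hΦ : mixedDisc2 (B 0 0) (B 1 1) - mixedDisc2 (B 0 1) (B 1 0)
      = Complex.ofReal (1 + (a-1)^2 + Complex.normSq (B 0 0 0 1)
        + (Complex.normSq (B 0 1 0 0) + Complex.normSq (B 0 1 0 1)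
         + Complex.normSq (B 0 1 1 0) + Complex.normSq (B 0 1 1 1))/2) := by
    simp only [mixedDisc2, Matrix.trace_fin_two, Matrix.mul_apply, Fin.sum_univ_two,
      e11, e10, h0010, h00, h11d, htr01, Matrix.smul_apply, Matrix.one_apply, map_neg]
    norm_num
    simp only [zero_sub, mul_neg, neg_mul, neg_neg, Complex.mul_conj, ← Complex.normSq_eq_conj_mul_self,
      Complex.normSq_neg]
    ring
  rw [hΦ]
  refine ⟨Complex.ofReal_im _, ?_⟩
  rw [Complex.ofReal_re]
  nlinarith [Complex.normSq_nonneg (B 0 0 0 1), Complex.normSq_nonneg (B 0 1 0 0),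
    Complex.normSq_nonneg (B 0 1 0 1), Complex.normSq_nonneg (B 0 1 1 0),
    Complex.normSq_nonneg (B 0 1 1 1), sq_nonneg (a-1)]
end
end

section
/- Let B_{ij} ∈ M₂(ℂ) (1 ≤ i,j ≤ 2) satisfy: (i) Σ_{i,j=1}^{2} ξ^i·conj(ξ^j)·B_{ij} is positive definite for every nonzero ξ ∈ ℂ²; (ii) B_{11} + B_{22} = 2·I; (iii) tr(B_{ij}) = 2·δ_{ij}. Then Φ := D(B_{11}, B_{22}) − D(B_{12}, B_{21}) = ∫_{S³} (4 − 3·det C(ξ)) dμ(ξ), where C(ξ) := (ξ*B_{ij}ξ)_{1≤i,j≤2} ∈ M₂(ℂ). -/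
open MeasureTheory Metric
open scoped BigOperators ComplexOrder

noncomputable section

/-- `ξ*Uξ = ∑_{p,q} conj(ξ^p) U_{pq} ξ^q`. -/
def quadForm {r : ℕ} (U : Matrix (Fin r) (Fin r) ℂ) (ξ : Fin r → ℂ) : ℂ :=
  ∑ p, ∑ q, (starRingEnd ℂ) (ξ p) * U p q * ξ q

instance (r : ℕ) : MeasurableSpace (EuclideanSpace ℂ (Fin r)) := borel _
instance (r : ℕ) : BorelSpace (EuclideanSpace ℂ (Fin r)) := ⟨rfl⟩

/-- The normalized rotation-invariant (uniform) probability measure on the unit sphere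
`S^{2r-1} = {ξ ∈ ℂ^r : ‖ξ‖ = 1}`. -/
def sphereUniform (r : ℕ) : Measure (sphere (0 : EuclideanSpace ℂ (Fin r)) 1) :=
  ((Measure.addHaar : Measure (EuclideanSpace ℂ (Fin r))).toSphere Set.univ)⁻¹ •
    (Measure.addHaar : Measure (EuclideanSpace ℂ (Fin r))).toSphere

open scoped Pointwise

/-! ### Auxiliary: geometry of `EuclideanSpace ℂ (Fin 2)` -/

abbrev E2 : Type := EuclideanSpace ℂ (Fin 2)

local notation "μH" => (Measure.addHaar : Measure E2)
local notation "νS" => Measure.toSphere (Measure.addHaar : Measure E2)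
local notation "Pm" => sphereUniform 2

lemma abs_det_isometry (e : E2 ≃ₗᵢ[ℝ] E2) :
    ENNReal.ofReal |LinearMap.det (e.toLinearEquiv : E2 →ₗ[ℝ] E2)| = 1 := by
  have himg : (e.toLinearEquiv : E2 →ₗ[ℝ] E2) '' (ball (0:E2) 1) = ball (0:E2) 1 := by
    ext x
    simp only [Set.mem_image, mem_ball, dist_zero_right]
    constructor
    · rintro ⟨y, hy, rfl⟩; simpa using hy
    · intro hx
      refine ⟨e.symm x, ?_, by simp⟩
      simpa using hx
  have h := Measure.addHaar_image_linearMap μH (e.toLinearEquiv : E2 →ₗ[ℝ] E2) (ball (0:E2) 1)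
  rw [himg] at h
  have h0 : μH (ball (0:E2) 1) ≠ 0 := (measure_ball_pos _ _ one_pos).ne'
  have ht : μH (ball (0:E2) 1) ≠ ⊤ := measure_ball_lt_top.ne
  exact (ENNReal.mul_eq_right h0 ht).mp h.symm

lemma haar_preimage_isometry (e : E2 ≃ₗᵢ[ℝ] E2) (s : Set E2) :
    μH (e ⁻¹' s) = μH s := by
  have h := Measure.addHaar_preimage_linearEquiv μH e.toLinearEquiv s
  rw [show (e.toLinearEquiv ⁻¹' s : Set E2) = e ⁻¹' s from rfl] at h
  rw [h, show e.toLinearEquiv.symm = e.symm.toLinearEquiv from rfl, abs_det_isometry e.symm,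
    one_mul]

lemma norm_one_of_mem {x : E2} (hx : x ∈ sphere (0:E2) 1) : ‖x‖ = 1 := by
  simpa [dist_zero_right] using hx

lemma mem_sphere_iff_norm_one {x : E2} : x ∈ sphere (0:E2) 1 ↔ ‖x‖ = 1 := by
  simp [mem_sphere, dist_zero_right]

def sphereMap (e : E2 ≃ₗᵢ[ℝ] E2) : sphere (0:E2) 1 ≃ₜ sphere (0:E2) 1 where
  toFun ξ := ⟨e ξ, mem_sphere_iff_norm_one.2 (by rw [e.norm_map]; exact norm_one_of_mem ξ.2)⟩
  invFun ξ := ⟨e.symm ξ, mem_sphere_iff_norm_one.2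
    (by rw [e.symm.norm_map]; exact norm_one_of_mem ξ.2)⟩
  left_inv ξ := by ext; simp
  right_inv ξ := by ext; simp
  continuous_toFun := Continuous.subtype_mk (e.continuous.comp continuous_subtype_val) _
  continuous_invFun := Continuous.subtype_mk (e.symm.continuous.comp continuous_subtype_val) _

lemma sphereMap_coe (e : E2 ≃ₗᵢ[ℝ] E2) (ξ : sphere (0:E2) 1) :
    ((sphereMap e ξ : sphere (0:E2) 1) : E2) = e (ξ : E2) := rfl

lemma coe_image_preimage (e : E2 ≃ₗᵢ[ℝ] E2) (s : Set (sphere (0:E2) 1)) :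
    ((↑) '' (sphereMap e ⁻¹' s) : Set E2) = e ⁻¹' ((↑) '' s) := by
  ext x
  simp only [Set.mem_image, Set.mem_preimage]
  constructor
  · rintro ⟨y, hy, rfl⟩
    exact ⟨sphereMap e y, hy, rfl⟩
  · rintro ⟨y, hy, hxy⟩
    have hx : x ∈ sphere (0:E2) 1 := by
      rw [mem_sphere_iff_norm_one, ← e.norm_map x, ← hxy]
      exact norm_one_of_mem y.2
    refine ⟨⟨x, hx⟩, ?_, rfl⟩
    have : sphereMap e ⟨x, hx⟩ = y := by
      apply Subtype.ext
      exact hxy.symm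
    show sphereMap e ⟨x, hx⟩ ∈ s
    rw [this]; exact hy

lemma smul_preimage (e : E2 ≃ₗᵢ[ℝ] E2) (I : Set ℝ) (A : Set E2) :
    I • (e ⁻¹' A) = e ⁻¹' (I • A) := by
  ext x
  constructor
  · rintro ⟨r, hr, a, ha, rfl⟩
    exact ⟨r, hr, e a, ha, by simp [_root_.map_smul]⟩
  · rintro ⟨r, hr, a, ha, hx⟩
    refine ⟨r, hr, e.symm a, by simpa using ha, ?_⟩
    apply e.injective
    rw [← hx]
    simp [_root_.map_smul]

lemma toSphere_invariant (e : E2 ≃ₗᵢ[ℝ] E2) :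
    Measure.map (sphereMap e) νS = νS := by
  refine Measure.ext fun s hs => ?_
  rw [Measure.map_apply (sphereMap e).continuous.measurable hs,
    Measure.toSphere_apply' _ (hs.preimage (sphereMap e).continuous.measurable),
    Measure.toSphere_apply' _ hs, coe_image_preimage, smul_preimage,
    haar_preimage_isometry]

lemma sphere_integral_invariant (e : E2 ≃ₗᵢ[ℝ] E2) (f : sphere (0:E2) 1 → ℂ) :
    ∫ ξ, f (sphereMap e ξ) ∂νS = ∫ ξ, f ξ ∂νS := by
  have hmp : MeasurePreserving (sphereMap e) νS νS :=
    ⟨(sphereMap e).continuous.measurable, toSphere_invariant e⟩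
  exact hmp.integral_comp' (f := (sphereMap e).toMeasurableEquiv) f

/-! ### Uniform measure basics -/

lemma nuS_ne_zero : νS Set.univ ≠ 0 := by
  rw [Measure.toSphere_apply_univ']
  refine mul_ne_zero ?_ ?_
  · simp [Module.finrank_pos.ne']
  · rw [measure_diff_null (measure_singleton _)]
    exact (measure_ball_pos _ _ one_pos).ne'

lemma nuS_ne_top : νS Set.univ ≠ ⊤ := measure_ne_top _ _

instance : IsProbabilityMeasure Pm := by
  constructor
  rw [sphereUniform, Measure.smul_apply, smul_eq_mul]
  exact ENNReal.inv_mul_cancel nuS_ne_zero nuS_ne_top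

lemma integral_sphereUniform (f : sphere (0:E2) 1 → ℂ) :
    ∫ ξ, f ξ ∂Pm = ((νS Set.univ)⁻¹).toReal • ∫ ξ, f ξ ∂νS := by
  rw [sphereUniform, integral_smul_measure]

lemma uniform_integral_invariant (e : E2 ≃ₗᵢ[ℝ] E2) (f : sphere (0:E2) 1 → ℂ) :
    ∫ ξ, f (sphereMap e ξ) ∂Pm = ∫ ξ, f ξ ∂Pm := by
  rw [integral_sphereUniform, integral_sphereUniform, sphere_integral_invariant]

lemma integrable_of_continuous (f : sphere (0:E2) 1 → ℂ) (hf : Continuous f) :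
    Integrable f Pm := by
  apply hf.integrable_of_hasCompactSupport
  exact IsCompact.of_isClosed_subset isCompact_univ (isClosed_tsupport f) (Set.subset_univ _)

lemma continuous_coord (p : Fin 2) : Continuous (fun ξ : sphere (0:E2) 1 => (ξ : E2) p) :=
  ((EuclideanSpace.proj p).continuous).comp continuous_subtype_val

/-! ### concrete isometries -/

def mkIsom (f : E2 ≃ₗ[ℂ] E2) (h : ∀ x, ‖f x‖ = ‖x‖) : E2 ≃ₗᵢ[ℝ] E2 :=
  ⟨f.restrictScalars ℝ, h⟩

lemma norm_sq_two (x : E2) : ‖x‖ ^ 2 = ‖x 0‖ ^ 2 + ‖x 1‖ ^ 2 := by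
  rw [EuclideanSpace.norm_eq, Real.sq_sqrt (by positivity)]
  simp [Fin.sum_univ_two]

lemma norm_eq_of_sq (x y : E2) (h : ‖x 0‖^2 + ‖x 1‖^2 = ‖y 0‖^2 + ‖y 1‖^2) : ‖x‖ = ‖y‖ := by
  have := (norm_sq_two x).trans (h.trans (norm_sq_two y).symm)
  have hx : 0 ≤ ‖x‖ := norm_nonneg x
  have hy : 0 ≤ ‖y‖ := norm_nonneg y
  nlinarith

def sq2 : ℂ := (Real.sqrt 2 : ℝ)
lemma sq2_mul_self : sq2 * sq2 = 2 := by
  rw [sq2, ← Complex.ofReal_mul, Real.mul_self_sqrt (by norm_num)]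
  norm_num
lemma sq2_ne : sq2 ≠ 0 := by
  intro h
  have := sq2_mul_self
  rw [h] at this; simp at this
lemma sq2_inv_sq : (sq2⁻¹ : ℂ) ^ 2 = 2⁻¹ := by
  rw [inv_pow, sq, sq2_mul_self]
lemma conj_sq2_inv : (starRingEnd ℂ) sq2⁻¹ = sq2⁻¹ := by
  rw [map_inv₀, sq2, Complex.conj_ofReal]

def diagEquiv (c : Fin 2 → ℂ) (hc : ∀ k, ‖c k‖ = 1) : E2 ≃ₗᵢ[ℝ] E2 :=
  mkIsom
    { toFun := fun ξ => (WithLp.toLp 2 (fun k => c k * ξ k) : E2)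
      invFun := fun ξ => (WithLp.toLp 2 (fun k => (c k)⁻¹ * ξ k) : E2)
      map_add' := by intro ξ η; ext k; show c k * (ξ k + η k) = _; ring_nf; rfl
      map_smul' := by
        intro a ξ; ext k
        show c k * (a * ξ k) = a * (c k * ξ k)
        ring
      left_inv := by
        intro ξ; ext k
        have : c k ≠ 0 := fun h => by simpa [h] using hc k
        show (c k)⁻¹ * (c k * ξ k) = ξ k
        field_simp
      right_inv := by
        intro ξ; ext k
        have : c k ≠ 0 := fun h => by simpa [h] using hc k
        show c k * ((c k)⁻¹ * ξ k) = ξ k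
        field_simp }
    (by
      intro x
      refine norm_eq_of_sq _ _ ?_
      show ‖c 0 * x 0‖^2 + ‖c 1 * x 1‖^2 = _
      simp [norm_mul, hc 0, hc 1])

lemma diagEquiv_apply (c : Fin 2 → ℂ) (hc : ∀ k, ‖c k‖ = 1) (x : E2) (k : Fin 2) :
    diagEquiv c hc x k = c k * x k := rfl

def swapFun (ξ : E2) : E2 := WithLp.toLp 2 (fun k : Fin 2 => ξ (k + 1))

def swapIso : E2 ≃ₗᵢ[ℝ] E2 :=
  mkIsom
    { toFun := swapFun
      invFun := swapFun
      map_add' := fun ξ η => rfl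
      map_smul' := fun a ξ => rfl
      left_inv := by intro ξ; ext k; show WithLp.ofLp (p := 2) ξ (k + 1 + 1) = WithLp.ofLp (p := 2) ξ k; rw [show k + 1 + 1 = k by fin_omega]
      right_inv := by intro ξ; ext k; show WithLp.ofLp (p := 2) ξ (k + 1 + 1) = WithLp.ofLp (p := 2) ξ k; rw [show k + 1 + 1 = k by fin_omega] }
    (by
      intro x
      refine norm_eq_of_sq _ _ ?_
      have h0 : swapFun x 0 = x 1 := rfl
      have h1 : swapFun x 1 = x 0 := rfl
      show ‖swapFun x 0‖^2 + ‖swapFun x 1‖^2 = _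
      rw [h0, h1]
      ring)

lemma swapIso_apply (x : E2) (k : Fin 2) : swapIso x k = x (k + 1) := rfl

def hadFun (ξ : E2) : E2 := WithLp.toLp 2 (fun k : Fin 2 => if k = 0 then sq2⁻¹ * (ξ 0 + ξ 1) else sq2⁻¹ * (ξ 0 - ξ 1))
lemma hadFun_zero (ξ : E2) : hadFun ξ 0 = sq2⁻¹ * (ξ 0 + ξ 1) := rfl
lemma hadFun_one (ξ : E2) : hadFun ξ 1 = sq2⁻¹ * (ξ 0 - ξ 1) := rfl

lemma hadFun_invol (ξ : E2) : hadFun (hadFun ξ) = ξ := by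
  ext k
  fin_cases k
  · show hadFun (hadFun ξ) 0 = ξ 0
    rw [hadFun_zero, hadFun_zero, hadFun_one]
    field_simp
    ring_nf
    rw [sq2_inv_sq]
    ring
  · show hadFun (hadFun ξ) 1 = ξ 1
    rw [hadFun_one, hadFun_zero, hadFun_one]
    field_simp
    ring_nf
    rw [sq2_inv_sq]
    ring

def hadIso : E2 ≃ₗᵢ[ℝ] E2 :=
  mkIsom
    { toFun := hadFun
      invFun := hadFun
      map_add' := by
        intro ξ η; ext k
        fin_cases k
        · show hadFun (ξ + η) 0 = hadFun ξ 0 + hadFun η 0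
          rw [hadFun_zero, hadFun_zero, hadFun_zero]
          show sq2⁻¹ * ((ξ 0 + η 0) + (ξ 1 + η 1)) = _
          ring
        · show hadFun (ξ + η) 1 = hadFun ξ 1 + hadFun η 1
          rw [hadFun_one, hadFun_one, hadFun_one]
          show sq2⁻¹ * ((ξ 0 + η 0) - (ξ 1 + η 1)) = _
          ring
      map_smul' := by
        intro a ξ; ext k
        fin_cases k
        · show hadFun (a • ξ) 0 = a * hadFun ξ 0
          rw [hadFun_zero, hadFun_zero]
          show sq2⁻¹ * (a * ξ 0 + a * ξ 1) = _
          ring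
        · show hadFun (a • ξ) 1 = a * hadFun ξ 1
          rw [hadFun_one, hadFun_one]
          show sq2⁻¹ * (a * ξ 0 - a * ξ 1) = _
          ring
      left_inv := hadFun_invol
      right_inv := hadFun_invol }
    (by
      intro x
      refine norm_eq_of_sq _ _ ?_
      have hpar := parallelogram_law_with_norm ℂ (x 0) (x 1)
      have hsq : ‖(sq2⁻¹ : ℂ)‖ = (Real.sqrt 2)⁻¹ := by
        rw [sq2, ← Complex.ofReal_inv, Complex.norm_real]
        simp [Real.sqrt_nonneg]
      have h2 : (Real.sqrt 2)⁻¹ ^ 2 = 2⁻¹ := by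
        rw [← Real.sqrt_inv]
        exact Real.sq_sqrt (by norm_num)
      show ‖hadFun x 0‖^2 + ‖hadFun x 1‖^2 = _
      rw [hadFun_zero, hadFun_one, norm_mul, norm_mul, hsq]
      nlinarith [hpar, h2])

lemma hadIso_apply_zero (x : E2) : hadIso x 0 = sq2⁻¹ * (x 0 + x 1) := rfl
lemma hadIso_apply_one (x : E2) : hadIso x 1 = sq2⁻¹ * (x 0 - x 1) := rfl

/-! ### Monomials and moments -/

def mono (p q r s : Fin 2) (ξ : sphere (0:E2) 1) : ℂ :=
  (starRingEnd ℂ) ((ξ:E2) p) * (ξ:E2) q * (starRingEnd ℂ) ((ξ:E2) r) * (ξ:E2) s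

lemma continuous_conj_coord (p : Fin 2) :
    Continuous (fun ξ : sphere (0:E2) 1 => (starRingEnd ℂ) ((ξ:E2) p)) :=
  continuous_star.comp (continuous_coord p)

lemma mono_continuous (p q r s : Fin 2) : Continuous (mono p q r s) :=
  (((continuous_conj_coord p).mul (continuous_coord q)).mul
    (continuous_conj_coord r)).mul (continuous_coord s)

lemma mono_integrable (p q r s : Fin 2) : Integrable (mono p q r s) Pm :=
  integrable_of_continuous _ (mono_continuous p q r s)

def MM (p q r s : Fin 2) : ℂ := ∫ ξ, mono p q r s ξ ∂Pm

/-! phase invariance -/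

def cI : Fin 2 → ℂ := ![Complex.I, 1]

lemma hcI : ∀ k, ‖cI k‖ = 1 := by
  intro k; fin_cases k <;> simp [cI]

def phIso : E2 ≃ₗᵢ[ℝ] E2 := diagEquiv cI hcI

lemma mono_phase (p q r s : Fin 2) (ξ : sphere (0:E2) 1) :
    mono p q r s (sphereMap phIso ξ)
      = ((starRingEnd ℂ) (cI p) * cI q * (starRingEnd ℂ) (cI r) * cI s) * mono p q r s ξ := by
  have h : ∀ k, ((sphereMap phIso ξ : sphere (0:E2) 1) : E2) k = cI k * (ξ:E2) k := fun k => rfl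
  simp only [mono, h, map_mul]
  ring

lemma MM_eq_zero (p q r s : Fin 2)
    (h : (starRingEnd ℂ) (cI p) * cI q * (starRingEnd ℂ) (cI r) * cI s ≠ 1) :
    MM p q r s = 0 := by
  set γ : ℂ := (starRingEnd ℂ) (cI p) * cI q * (starRingEnd ℂ) (cI r) * cI s with hγ
  have h1 : MM p q r s = γ * MM p q r s := by
    conv_lhs => rw [MM, ← uniform_integral_invariant phIso (mono p q r s)]
    rw [show (fun ξ => mono p q r s (sphereMap phIso ξ)) = fun ξ => γ * mono p q r s ξ from
      funext fun ξ => mono_phase p q r s ξ]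
    simp_rw [← smul_eq_mul (a := γ)]
    rw [integral_smul, MM, smul_eq_mul]
  have h3 : (1 - γ) * MM p q r s = 0 := by linear_combination h1
  rcases mul_eq_zero.mp h3 with h4 | h4
  · exact absurd (sub_eq_zero.mp h4).symm h
  · exact h4

/-! swap invariance -/

lemma MM_swap (p q r s : Fin 2) : MM p q r s = MM (p+1) (q+1) (r+1) (s+1) := by
  rw [MM, ← uniform_integral_invariant swapIso (mono p q r s), MM]
  rfl

lemma fin_add01 : ((0:Fin 2)+1) = 1 := rfl
lemma fin_add11 : ((1:Fin 2)+1) = 0 := rfl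

/-! the constraint `∑ |ξᵢ|² = 1` -/

lemma sum_one (ξ : sphere (0:E2) 1) :
    (starRingEnd ℂ) ((ξ:E2) 0) * (ξ:E2) 0 + (starRingEnd ℂ) ((ξ:E2) 1) * (ξ:E2) 1 = 1 := by
  have hn : ‖(ξ:E2)‖ = 1 := norm_one_of_mem ξ.2
  have h2 : ‖(ξ:E2) 0‖^2 + ‖(ξ:E2) 1‖^2 = 1 := by
    rw [← norm_sq_two, hn]; norm_num
  have c0 : (starRingEnd ℂ) ((ξ:E2) 0) * (ξ:E2) 0 = ((‖(ξ:E2) 0‖^2 : ℝ) : ℂ) := by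
    rw [← Complex.normSq_eq_conj_mul_self, Complex.normSq_eq_norm_sq]
  have c1 : (starRingEnd ℂ) ((ξ:E2) 1) * (ξ:E2) 1 = ((‖(ξ:E2) 1‖^2 : ℝ) : ℂ) := by
    rw [← Complex.normSq_eq_conj_mul_self, Complex.normSq_eq_norm_sq]
  rw [c0, c1, ← Complex.ofReal_add, h2]
  norm_num

def mono2 (p : Fin 2) (ξ : sphere (0:E2) 1) : ℂ := (starRingEnd ℂ) ((ξ:E2) p) * (ξ:E2) p

lemma mono2_integrable (p : Fin 2) : Integrable (mono2 p) Pm :=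
  integrable_of_continuous _ ((continuous_conj_coord p).mul (continuous_coord p))

lemma S_swap : (∫ ξ, mono2 1 ξ ∂Pm) = ∫ ξ, mono2 0 ξ ∂Pm := by
  rw [← uniform_integral_invariant swapIso (mono2 0)]
  rfl

lemma S_zero : (∫ ξ, mono2 0 ξ ∂Pm) = 2⁻¹ := by
  have hadd : (∫ ξ, mono2 0 ξ ∂Pm) + (∫ ξ, mono2 1 ξ ∂Pm) = 1 := by
    rw [← integral_add (mono2_integrable 0) (mono2_integrable 1)]
    rw [show (fun ξ => mono2 0 ξ + mono2 1 ξ) = fun _ => (1:ℂ) from funext fun ξ => sum_one ξ]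
    simp [measure_univ]
  have hs := S_swap
  linear_combination (2⁻¹ : ℂ) * hadd - (2⁻¹ : ℂ) * hs

lemma ab_sum : MM 0 0 0 0 + MM 0 0 1 1 = 2⁻¹ := by
  rw [MM, MM, ← integral_add (mono_integrable 0 0 0 0) (mono_integrable 0 0 1 1)]
  rw [show (fun ξ => mono 0 0 0 0 ξ + mono 0 0 1 1 ξ) = mono2 0 from
    funext fun ξ => by
      have h := sum_one ξ
      simp only [mono, mono2]
      linear_combination ((starRingEnd ℂ) ((ξ:E2) 0) * (ξ:E2) 0) * h]
  exact S_zero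

/-! sums of monomials -/

abbrev Idx : Type := Fin 2 × Fin 2 × Fin 2 × Fin 2

def monoP (t : Idx) : sphere (0:E2) 1 → ℂ := mono t.1 t.2.1 t.2.2.1 t.2.2.2

lemma integral_sum_mono (c : Idx → ℂ) :
    ∫ ξ, (∑ t : Idx, c t * monoP t ξ) ∂Pm
      = ∑ t : Idx, c t * MM t.1 t.2.1 t.2.2.1 t.2.2.2 := by
  simp only [monoP]
  rw [integral_finset_sum _ (fun t _ =>
    (mono_integrable t.1 t.2.1 t.2.2.1 t.2.2.2).const_mul (c t))]
  refine Finset.sum_congr rfl fun t _ => ?_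
  simp_rw [← smul_eq_mul (a := c t)]
  rw [integral_smul, MM, smul_eq_mul]

/-! Hadamard relation -/

lemma had_expand (ξ : sphere (0:E2) 1) :
    mono 0 0 0 0 (sphereMap hadIso ξ) = ∑ t : Idx, (4⁻¹ : ℂ) * monoP t ξ := by
  have hw : ((sphereMap hadIso ξ : sphere (0:E2) 1) : E2) 0
      = sq2⁻¹ * ((ξ:E2) 0 + (ξ:E2) 1) := rfl
  have h4 : (sq2⁻¹ : ℂ)^4 = 4⁻¹ := by
    rw [show ((sq2⁻¹:ℂ)^4) = ((sq2⁻¹:ℂ)^2)^2 by ring, sq2_inv_sq]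
    norm_num
  simp only [mono, monoP, hw, Fintype.sum_prod_type, Fin.sum_univ_two, map_mul, map_add,
    conj_sq2_inv]
  linear_combination (((starRingEnd ℂ) ((ξ:E2) 0) + (starRingEnd ℂ) ((ξ:E2) 1)) ^ 2
    * ((ξ:E2) 0 + (ξ:E2) 1) ^ 2) * h4

lemma MM_had : MM 0 0 0 0 = ∑ t : Idx, (4⁻¹ : ℂ) * MM t.1 t.2.1 t.2.2.1 t.2.2.2 := by
  rw [MM, ← uniform_integral_invariant hadIso (mono 0 0 0 0),
    show (fun ξ => mono 0 0 0 0 (sphereMap hadIso ξ)) = fun ξ => ∑ t : Idx, (4⁻¹:ℂ) * monoP t ξ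
      from funext had_expand]
  exact integral_sum_mono _
-- moment values
lemma MMz_0001 : MM 0 0 0 1 = 0 := MM_eq_zero _ _ _ _ (by norm_num [cI, Complex.ext_iff])
lemma MMz_0010 : MM 0 0 1 0 = 0 := MM_eq_zero _ _ _ _ (by norm_num [cI, Complex.ext_iff])
lemma MMz_0100 : MM 0 1 0 0 = 0 := MM_eq_zero _ _ _ _ (by norm_num [cI, Complex.ext_iff])
lemma MMz_1000 : MM 1 0 0 0 = 0 := MM_eq_zero _ _ _ _ (by norm_num [cI, Complex.ext_iff])
lemma MMz_0111 : MM 0 1 1 1 = 0 := MM_eq_zero _ _ _ _ (by norm_num [cI, Complex.ext_iff])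
lemma MMz_1011 : MM 1 0 1 1 = 0 := MM_eq_zero _ _ _ _ (by norm_num [cI, Complex.ext_iff])
lemma MMz_1101 : MM 1 1 0 1 = 0 := MM_eq_zero _ _ _ _ (by norm_num [cI, Complex.ext_iff])
lemma MMz_1110 : MM 1 1 1 0 = 0 := MM_eq_zero _ _ _ _ (by norm_num [cI, Complex.ext_iff])
lemma MMz_0101 : MM 0 1 0 1 = 0 := MM_eq_zero _ _ _ _ (by norm_num [cI, Complex.ext_iff])
lemma MMz_1010 : MM 1 0 1 0 = 0 := MM_eq_zero _ _ _ _ (by norm_num [cI, Complex.ext_iff])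

lemma MM_1111 : MM 1 1 1 1 = MM 0 0 0 0 := by
  have h := MM_swap 0 0 0 0
  rw [fin_add01] at h
  exact h.symm
lemma MM_1100 : MM 1 1 0 0 = MM 0 0 1 1 := by
  have h := MM_swap 0 0 1 1
  rw [fin_add01, fin_add11] at h
  exact h.symm
lemma MM_0110 : MM 0 1 1 0 = MM 0 0 1 1 := by
  rw [MM, MM]
  congr 1
  funext ξ
  simp only [mono]
  ring
lemma MM_1001 : MM 1 0 0 1 = MM 0 0 1 1 := by
  have h := MM_swap 0 1 1 0
  rw [fin_add01, fin_add11] at h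
  rw [← h, MM_0110]

lemma MM_a_rel : MM 0 0 0 0 = 4⁻¹ * (2 * MM 0 0 0 0 + 4 * MM 0 0 1 1) := by
  have h := MM_had
  rw [show (∑ t : Idx, (4⁻¹ : ℂ) * MM t.1 t.2.1 t.2.2.1 t.2.2.2)
      = 4⁻¹ * (2 * MM 0 0 0 0 + 4 * MM 0 0 1 1) from by
    simp only [Fintype.sum_prod_type, Fin.sum_univ_two, MMz_0001, MMz_0010, MMz_0100, MMz_1000,
      MMz_0111, MMz_1011, MMz_1101, MMz_1110, MMz_0101, MMz_1010, MM_1111, MM_1100, MM_0110,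
      MM_1001]
    ring] at h
  exact h

lemma MM_val_a : MM 0 0 0 0 = 3⁻¹ := by
  have h1 := ab_sum
  have h2 := MM_a_rel
  linear_combination (2/3 : ℂ) * h1 + (2/3 : ℂ) * h2

lemma MM_val_b : MM 0 0 1 1 = 6⁻¹ := by
  have h1 := ab_sum
  have h2 := MM_a_rel
  linear_combination (1/3 : ℂ) * h1 - (2/3 : ℂ) * h2

/-- under the rank-two normalizations (i)–(iii),
`Φ = D(B₁₁,B₂₂) − D(B₁₂,B₂₁) = ∫_{S³} (4 − 3 det C(ξ)) dμ(ξ)`,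
where `C(ξ) = (ξ* B_{ij} ξ)_{1≤i,j≤2}`. -/
theorem stmt13 (B : Fin 2 → Fin 2 → Matrix (Fin 2) (Fin 2) ℂ)
    (hpos : ∀ ξ : Fin 2 → ℂ, ξ ≠ 0 →
      (∑ i : Fin 2, ∑ j : Fin 2, (ξ i * (starRingEnd ℂ) (ξ j)) • B i j).PosDef)
    (hsum : B 0 0 + B 1 1 = (2 : ℂ) • (1 : Matrix (Fin 2) (Fin 2) ℂ))
    (htr : ∀ i j : Fin 2, Matrix.trace (B i j) = if i = j then (2 : ℂ) else 0) :
    mixedDisc2 (B 0 0) (B 1 1) - mixedDisc2 (B 0 1) (B 1 0)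
      = ∫ ξ, (4 - 3 * Matrix.det
          (Matrix.of fun i j : Fin 2 =>
            quadForm (B i j) (fun p => (ξ : EuclideanSpace ℂ (Fin 2)) p)))
          ∂(sphereUniform 2) := by
  have h00 : B 0 0 0 0 + B 0 0 1 1 = 2 := by
    have := htr 0 0; rwa [Matrix.trace_fin_two, if_pos rfl] at this
  have h11 : B 1 1 0 0 + B 1 1 1 1 = 2 := by
    have := htr 1 1; rwa [Matrix.trace_fin_two, if_pos rfl] at this
  have h01 : B 0 1 0 0 + B 0 1 1 1 = 0 := by
    have := htr 0 1; rwa [Matrix.trace_fin_two, if_neg (by norm_num)] at this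
  set dB : Idx → ℂ := fun t => 3 * (B 0 0 t.1 t.2.1 * B 1 1 t.2.2.1 t.2.2.2
      - B 0 1 t.1 t.2.1 * B 1 0 t.2.2.1 t.2.2.2) with hdB
  have hpt : ∀ ξ : sphere (0 : EuclideanSpace ℂ (Fin 2)) 1,
      (4 - 3 * Matrix.det
          (Matrix.of fun i j : Fin 2 =>
            quadForm (B i j) (fun p => (ξ : EuclideanSpace ℂ (Fin 2)) p)))
        = 4 - ∑ t : Idx, dB t * monoP t ξ := by
    intro ξ
    rw [Matrix.det_fin_two]
    simp only [Matrix.of_apply, quadForm, Fin.sum_univ_two, monoP, mono, hdB,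
      Fintype.sum_prod_type]
    ring
  have hInt : Integrable (fun ξ => ∑ t : Idx, dB t * monoP t ξ) Pm :=
    integrable_finset_sum _ (fun t _ =>
      (mono_integrable t.1 t.2.1 t.2.2.1 t.2.2.2).const_mul (dB t))
  have key : (∫ ξ, (4 - 3 * Matrix.det
          (Matrix.of fun i j : Fin 2 =>
            quadForm (B i j) (fun p => (ξ : EuclideanSpace ℂ (Fin 2)) p)))
          ∂(sphereUniform 2))
      = 4 - ∑ t : Idx, dB t * MM t.1 t.2.1 t.2.2.1 t.2.2.2 := by
    rw [funext hpt, integral_sub (integrable_const _) hInt, integral_sum_mono dB,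
      integral_const]
    simp [measure_univ]
  rw [key]
  simp only [Fintype.sum_prod_type, Fin.sum_univ_two, hdB, MMz_0001, MMz_0010, MMz_0100,
    MMz_1000, MMz_0111, MMz_1011, MMz_1101, MMz_1110, MMz_0101, MMz_1010, MM_1111, MM_1100,
    MM_0110, MM_1001, MM_val_a, MM_val_b]
  simp only [mixedDisc2, Matrix.trace_fin_two, Matrix.mul_apply, Fin.sum_univ_two]
  linear_combination (B 1 1 0 0 + B 1 1 1 1) * h00 + 2 * h11
    - (B 1 0 0 0 + B 1 0 1 1) * h01
end
end

section
/- Let r ≥ 1, let B_{ij} ∈ M_r(ℂ) (1 ≤ i,j ≤ r) be arbitrary matrices, and let C₁, C₂ ∈ M_r(ℂ) be invertible. Define B̃_{ij} := Σ_{p,q=1}^{r} conj((C₂)_{ip})·(C₂)_{jq}·(C₁ · B_{pq} · C₁*). Then Σ_{σ∈S_r} sgn(σ)·D(B̃_{1σ(1)},…,B̃_{rσ(r)}) = |det C₁|²·|det C₂|² · Σ_{σ∈S_r} sgn(σ)·D(B_{1σ(1)},…,B_{rσ(r)}). In particular, the operator scaling does not change the sign of Φ := Σ_{σ∈S_r}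 sgn(σ)·D(B_{1σ(1)},…,B_{rσ(r)}). -/
open scoped BigOperators

noncomputable section

/-- The mixed discriminant of `r` complex `r × r` matrices. -/
def mixedDisc {r : ℕ} (A : Fin r → Matrix (Fin r) (Fin r) ℂ) : ℂ :=
  (1 / (Nat.factorial r : ℂ)) *
    ∑ σ : Equiv.Perm (Fin r), Matrix.det (Matrix.of fun i k => A (σ i) i k)

namespace Stmt14Aux

open Matrix Equiv Finset

variable {r : ℕ}

lemma aux_incl_excl (T : Finset (Fin r)) :
    ∑ S : Finset (Fin r), (if T ⊆ S then ((-1:ℂ))^(r - S.card) else 0)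
      = if T = Finset.univ then 1 else 0 := by
  classical
  rw [← Finset.sum_filter]
  have key : ∑ S ∈ Finset.univ.filter (fun S => T ⊆ S), ((-1:ℂ))^(r - S.card)
      = ∑ U ∈ Tᶜ.powerset, ((-1:ℂ))^(r - (U.card + T.card)) := by
    refine Finset.sum_nbij' (fun S => S \ T) (fun U => U ∪ T) ?_ ?_ ?_ ?_ ?_
    · intro S hS
      simp only [Finset.mem_filter, Finset.mem_univ, true_and] at hS
      simp only [Finset.mem_powerset]
      intro x hx
      simp only [Finset.mem_sdiff] at hx
      simp [Finset.mem_compl, hx.2]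
    · intro U hU
      simp only [Finset.mem_filter, Finset.mem_univ, true_and]
      exact Finset.subset_union_right
    · intro S hS
      simp only [Finset.mem_filter, Finset.mem_univ, true_and] at hS
      exact Finset.sdiff_union_of_subset hS
    · intro U hU
      simp only [Finset.mem_powerset] at hU
      show (U ∪ T) \ T = U
      rw [Finset.union_sdiff_right]
      exact Finset.sdiff_eq_self_of_disjoint (Finset.disjoint_left.mpr fun x hx =>
        by have := hU hx; simp only [Finset.mem_compl] at this; exact this)
    · intro S hS
      simp only [Finset.mem_filter, Finset.mem_univ, true_and] at hS
      have h1 := Finset.card_le_card hS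
      congr 1
      rw [Finset.card_sdiff_of_subset hS]
      omega
  rw [key]
  have hc : Tᶜ.card + T.card = r := by
    have := Finset.card_compl_add_card T
    simpa using this
  have sq : ∀ k : ℕ, ((-1:ℂ))^k * ((-1:ℂ))^k = 1 := by
    intro k; rw [← pow_add]; exact Even.neg_one_pow ⟨k, rfl⟩
  have step : ∀ U ∈ Tᶜ.powerset, ((-1:ℂ))^(r - (U.card + T.card))
      = ((-1:ℂ))^(Tᶜ.card) * ((-1:ℂ))^(U.card) := by
    intro U hU
    simp only [Finset.mem_powerset] at hU
    have h2 : U.card ≤ Tᶜ.card := Finset.card_le_card hU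
    have h3 : r - (U.card + T.card) = Tᶜ.card - U.card := by omega
    rw [h3]
    conv_rhs => rw [show Tᶜ.card = (Tᶜ.card - U.card) + U.card by omega, pow_add, mul_assoc,
      sq U.card, mul_one]
  rw [Finset.sum_congr rfl step, ← Finset.mul_sum]
  have cast : ∑ U ∈ Tᶜ.powerset, ((-1:ℂ))^(U.card)
      = (((∑ U ∈ Tᶜ.powerset, ((-1:ℤ))^(U.card)) : ℤ) : ℂ) := by
    push_cast; rfl
  rw [cast, Finset.sum_powerset_neg_one_pow_card]
  by_cases h : T = Finset.univ
  · have : Tᶜ = (∅ : Finset (Fin r)) := by simp [h]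
    simp [h, this]
  · have : Tᶜ ≠ (∅ : Finset (Fin r)) := by
      simp only [ne_eq, Finset.compl_eq_empty_iff]
      exact h
    simp [h, this]

lemma sum_fun_eq_sum_perm (G : (Fin r → Fin r) → ℂ)
    (hG : ∀ m : Fin r → Fin r, ¬ Function.Bijective m → G m = 0) :
    ∑ m : Fin r → Fin r, G m = ∑ σ : Equiv.Perm (Fin r), G ⇑σ := by
  classical
  have h1 : ∑ m : Fin r → Fin r, G m
      = ∑ m ∈ Finset.univ.filter (fun m => Function.Bijective m), G m := by
    refine (Finset.sum_subset (Finset.filter_subset _ _) ?_).symm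
    intro m _ hm
    simp only [Finset.mem_filter, Finset.mem_univ, true_and] at hm
    exact hG m hm
  rw [h1]
  refine (Finset.sum_bij (fun (σ : Equiv.Perm (Fin r)) _ => ⇑σ) ?_ ?_ ?_ ?_).symm
  · intro σ _
    simp only [Finset.mem_filter, Finset.mem_univ, true_and]
    exact σ.bijective
  · intro a _ b _ h
    exact Equiv.coe_fn_injective h
  · intro m hm
    simp only [Finset.mem_filter, Finset.mem_univ, true_and] at hm
    exact ⟨Equiv.ofBijective m hm, Finset.mem_univ _, rfl⟩
  · intro σ _
    rfl

lemma det_sum_expand (S : Finset (Fin r)) (A : Fin r → Matrix (Fin r) (Fin r) ℂ) :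
    (∑ i ∈ S, A i).det
      = ∑ h ∈ Fintype.piFinset (fun _ : Fin r => S),
          (Matrix.of fun i k => A (h i) i k).det := by
  classical
  have h0 : (∑ i ∈ S, A i).det
      = (Matrix.detRowAlternating : (Fin r → ℂ) [⋀^Fin r]→ₗ[ℂ] ℂ).toMultilinearMap
          (fun i => ∑ j ∈ S, A j i) := by
    congr 1
    funext i k
    simp [Matrix.sum_apply, Finset.sum_apply]
  rw [h0, MultilinearMap.map_sum_finset]
  rfl

lemma polar (A : Fin r → Matrix (Fin r) (Fin r) ℂ) :
    ∑ σ : Equiv.Perm (Fin r), (Matrix.of fun i k => A (σ i) i k).det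
      = ∑ S : Finset (Fin r), ((-1:ℂ))^(r - S.card) * (∑ i ∈ S, A i).det := by
  classical
  have hset : ∀ S : Finset (Fin r),
      Finset.univ.filter (fun h : Fin r → Fin r => Finset.univ.image h ⊆ S)
        = Fintype.piFinset (fun _ : Fin r => S) := by
    intro S
    ext h
    simp [Fintype.mem_piFinset, Finset.image_subset_iff]
  have h1 : ∀ S : Finset (Fin r), ((-1:ℂ))^(r - S.card) * (∑ i ∈ S, A i).det
      = ∑ h : Fin r → Fin r,
          (if Finset.univ.image h ⊆ S then ((-1:ℂ))^(r - S.card) else 0)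
            * (Matrix.of fun i k => A (h i) i k).det := by
    intro S
    rw [det_sum_expand, Finset.mul_sum, ← hset S, Finset.sum_filter]
    simp only [ite_mul, zero_mul]
  rw [Finset.sum_congr rfl (fun S _ => h1 S), Finset.sum_comm]
  have h2 : ∀ h : Fin r → Fin r,
      ∑ S : Finset (Fin r),
          (if Finset.univ.image h ⊆ S then ((-1:ℂ))^(r - S.card) else 0)
            * (Matrix.of fun i k => A (h i) i k).det
        = (if Finset.univ.image h = Finset.univ then 1 else 0)
            * (Matrix.of fun i k => A (h i) i k).det := by
    intro h
    rw [← Finset.sum_mul, aux_incl_excl]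
  rw [Finset.sum_congr rfl (fun h _ => h2 h)]
  rw [sum_fun_eq_sum_perm]
  · refine Finset.sum_congr rfl fun σ _ => ?_
    rw [Finset.image_univ_equiv σ, if_pos rfl, one_mul]
  · intro m hm
    have : Finset.univ.image m ≠ Finset.univ := by
      intro hc
      refine hm (Finite.surjective_iff_bijective.mp ?_)
      intro y
      have : y ∈ Finset.univ.image m := by rw [hc]; exact Finset.mem_univ y
      simpa using this
    rw [if_neg this, zero_mul]

lemma mixedDisc_mul (X Y : Matrix (Fin r) (Fin r) ℂ) (A : Fin r → Matrix (Fin r) (Fin r) ℂ) :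
    mixedDisc (fun i => X * A i * Y) = X.det * Y.det * mixedDisc A := by
  unfold mixedDisc
  beta_reduce
  rw [polar (fun i => X * A i * Y), polar A]
  have key : ∀ S : Finset (Fin r), (∑ i ∈ S, X * A i * Y).det
      = X.det * Y.det * (∑ i ∈ S, A i).det := by
    intro S
    have : ∑ i ∈ S, X * A i * Y = X * (∑ i ∈ S, A i) * Y := by
      rw [Finset.mul_sum, Finset.sum_mul]
    rw [this, Matrix.det_mul, Matrix.det_mul]
    ring
  rw [Finset.sum_congr rfl fun S _ => by
    rw [show (∑ i ∈ S, (fun i => X * A i * Y) i) = ∑ i ∈ S, X * A i * Y from rfl, key S]]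
  have : ∑ S : Finset (Fin r), ((-1:ℂ))^(r - S.card) * (X.det * Y.det * (∑ i ∈ S, A i).det)
      = X.det * Y.det * ∑ S : Finset (Fin r), ((-1:ℂ))^(r - S.card) * (∑ i ∈ S, A i).det := by
    rw [Finset.mul_sum]
    exact Finset.sum_congr rfl fun S _ => by ring
  rw [this]
  ring

lemma C0 (B : Fin r → Fin r → Matrix (Fin r) (Fin r) ℂ) :
    ∑ σ : Equiv.Perm (Fin r),
        ((Equiv.Perm.sign σ : ℤ) : ℂ) * mixedDisc (fun i => B i (σ i))
      = (1 / (Nat.factorial r : ℂ)) *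
          ∑ f : Equiv.Perm (Fin r), ∑ g : Equiv.Perm (Fin r),
            ((Equiv.Perm.sign f : ℤ) : ℂ) * ((Equiv.Perm.sign g : ℤ) : ℂ) *
              (Matrix.of fun i k => B (f i) (g i) i k).det := by
  unfold mixedDisc
  beta_reduce
  have step1 : ∀ σ : Equiv.Perm (Fin r),
      ((Equiv.Perm.sign σ : ℤ) : ℂ) * ((1 / (Nat.factorial r : ℂ)) *
        ∑ τ : Equiv.Perm (Fin r), (Matrix.of fun i k => B (τ i) (σ (τ i)) i k).det)
      = (1 / (Nat.factorial r : ℂ)) *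
        ∑ τ : Equiv.Perm (Fin r),
          ((Equiv.Perm.sign σ : ℤ) : ℂ) * (Matrix.of fun i k => B (τ i) (σ (τ i)) i k).det := by
    intro σ
    simp only [Finset.mul_sum]
    exact Finset.sum_congr rfl fun τ _ => by ring
  rw [Finset.sum_congr rfl fun σ _ => step1 σ, ← Finset.mul_sum]
  congr 1
  rw [Finset.sum_comm]
  refine Finset.sum_congr rfl fun τ _ => ?_
  refine Fintype.sum_equiv (Equiv.mulRight τ) _ _ fun σ => ?_
  show ((Equiv.Perm.sign σ : ℤ) : ℂ) * (Matrix.of fun i k => B (τ i) (σ (τ i)) i k).det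
    = ((Equiv.Perm.sign τ : ℤ) : ℂ) * ((Equiv.Perm.sign (σ * τ) : ℤ) : ℂ) *
        (Matrix.of fun i k => B (τ i) ((σ * τ) i) i k).det
  have happ : (Matrix.of fun i k => B (τ i) ((σ * τ) i) i k)
      = (Matrix.of fun i k => B (τ i) (σ (τ i)) i k) := by
    funext i k
    simp [Equiv.Perm.mul_apply]
  rw [happ]
  have hsign : ((Equiv.Perm.sign τ : ℤ) : ℂ) * ((Equiv.Perm.sign (σ * τ) : ℤ) : ℂ)
      = ((Equiv.Perm.sign σ : ℤ) : ℂ) := by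
    rw [Equiv.Perm.sign_mul]
    have hu : Equiv.Perm.sign τ * (Equiv.Perm.sign σ * Equiv.Perm.sign τ)
        = Equiv.Perm.sign σ := by
      rw [mul_comm (Equiv.Perm.sign σ), ← mul_assoc, Int.units_mul_self, one_mul]
    calc ((Equiv.Perm.sign τ : ℤ) : ℂ) * ((Equiv.Perm.sign σ * Equiv.Perm.sign τ : ℤˣ) : ℤ)
        = (((Equiv.Perm.sign τ * (Equiv.Perm.sign σ * Equiv.Perm.sign τ) : ℤˣ) : ℤ) : ℂ) := by
          push_cast [Units.val_mul]; ring
      _ = _ := by rw [hu]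
  rw [hsign]

lemma det_row_expand (w : Fin r → (Fin r × Fin r) → ℂ)
    (v : Fin r → (Fin r × Fin r) → (Fin r → ℂ)) :
    (Matrix.of fun i k => ∑ z : Fin r × Fin r, w i z * v i z k).det
      = ∑ h : Fin r → (Fin r × Fin r),
          (∏ i, w i (h i)) * (Matrix.of fun i k => v i (h i) k).det := by
  classical
  have h0 : (Matrix.of fun i k => ∑ z : Fin r × Fin r, w i z * v i z k).det
      = (Matrix.detRowAlternating : (Fin r → ℂ) [⋀^Fin r]→ₗ[ℂ] ℂ).toMultilinearMap
          (fun i => ∑ z : Fin r × Fin r, w i z • v i z) := by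
    congr 1
    funext i k
    simp [Finset.sum_apply]
  rw [h0, MultilinearMap.map_sum]
  refine Finset.sum_congr rfl fun h _ => ?_
  rw [MultilinearMap.map_smul_univ, smul_eq_mul]
  rfl

lemma col_det (C : Matrix (Fin r) (Fin r) ℂ) (m : Fin r → Fin r) :
    ∑ f : Equiv.Perm (Fin r), ((Equiv.Perm.sign f : ℤ) : ℂ) * ∏ i, C (f i) (m i)
      = (C.submatrix id m).det := by
  rw [Matrix.det_apply']
  rfl

lemma col_det_vanish (C : Matrix (Fin r) (Fin r) ℂ) (m : Fin r → Fin r)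
    (hm : ¬ Function.Injective m) : (C.submatrix id m).det = 0 := by
  simp only [Function.Injective, not_forall] at hm
  obtain ⟨a, b, hab, hne⟩ := hm
  exact Matrix.det_zero_of_column_eq hne (fun k => by simp [Matrix.submatrix, hab])

lemma col_det_conj (C : Matrix (Fin r) (Fin r) ℂ) (m : Fin r → Fin r) :
    ∑ f : Equiv.Perm (Fin r),
        ((Equiv.Perm.sign f : ℤ) : ℂ) * ∏ i, (starRingEnd ℂ) (C (f i) (m i))
      = (starRingEnd ℂ) ((C.submatrix id m).det) := by
  rw [← col_det, map_sum]
  refine Finset.sum_congr rfl fun f _ => ?_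
  rw [_root_.map_mul, map_prod]
  congr 1
  simp

end Stmt14Aux

open Stmt14Aux Matrix Equiv Finset in
/-- invariance of `Φ` under Gurvits' operator scaling: for arbitrary
`B i j ∈ M_r(ℂ)` and invertible `C₁, C₂ ∈ M_r(ℂ)`, setting
`B̃_{ij} := ∑_{p,q} conj((C₂)_{ip}) (C₂)_{jq} · (C₁ B_{pq} C₁*)`, one has
`∑_σ sgn σ · D(B̃₁σ(1),…,B̃_rσ(r)) = |det C₁|² |det C₂|² ∑_σ sgn σ · D(B₁σ(1),…,B_rσ(r))`;
in particular the scaling does not change the sign of `Φ`. -/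
theorem stmt14 (r : ℕ) (hr : 1 ≤ r) (B : Fin r → Fin r → Matrix (Fin r) (Fin r) ℂ)
    (C₁ C₂ : Matrix (Fin r) (Fin r) ℂ)
    (hC₁ : IsUnit (Matrix.det C₁)) (hC₂ : IsUnit (Matrix.det C₂))
    (Bt : Fin r → Fin r → Matrix (Fin r) (Fin r) ℂ)
    (hBt : ∀ i j, Bt i j
      = ∑ p : Fin r, ∑ q : Fin r,
          ((starRingEnd ℂ) (C₂ i p) * C₂ j q) • (C₁ * B p q * C₁.conjTranspose)) :
    ∑ σ : Equiv.Perm (Fin r),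
        ((Equiv.Perm.sign σ : ℤ) : ℂ) * mixedDisc (fun i => Bt i (σ i))
      = ((‖Matrix.det C₁‖ : ℝ) : ℂ) ^ 2 * ((‖Matrix.det C₂‖ : ℝ) : ℂ) ^ 2 *
          ∑ σ : Equiv.Perm (Fin r),
            ((Equiv.Perm.sign σ : ℤ) : ℂ) * mixedDisc (fun i => B i (σ i)) := by
  classical
  set d₁ : ℂ := Matrix.det C₁
  set d₂ : ℂ := Matrix.det C₂
  -- the conjugated inner family
  set B' : Fin r → Fin r → Matrix (Fin r) (Fin r) ℂ :=
    fun p q => C₁ * B p q * C₁.conjTranspose with hB'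
  -- entrywise formula for Bt
  have hBt' : ∀ a b (i k : Fin r), Bt a b i k
      = ∑ z : Fin r × Fin r,
          ((starRingEnd ℂ) (C₂ a z.1) * C₂ b z.2) * (B' z.1 z.2 i k) := by
    intro a b i k
    rw [hBt, Fintype.sum_prod_type]
    simp [Matrix.sum_apply, hB']
  -- Step 1: rewrite via C0
  rw [C0 Bt, C0 B]
  -- expand Δt f g
  have hΔ : ∀ f g : Equiv.Perm (Fin r),
      (Matrix.of fun i k => Bt (f i) (g i) i k).det
        = ∑ h : Fin r → (Fin r × Fin r),
            ((∏ i, (starRingEnd ℂ) (C₂ (f i) (h i).1)) * (∏ i, C₂ (g i) (h i).2)) *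
              (Matrix.of fun i k => B' (h i).1 (h i).2 i k).det := by
    intro f g
    have e1 : (Matrix.of fun i k => Bt (f i) (g i) i k)
        = Matrix.of fun i k => ∑ z : Fin r × Fin r,
            ((starRingEnd ℂ) (C₂ (f i) z.1) * C₂ (g i) z.2) *
              ((fun (i : Fin r) (z : Fin r × Fin r) => (B' z.1 z.2 i : Fin r → ℂ)) i z k) := by
      funext i k
      exact hBt' (f i) (g i) i k
    rw [e1, det_row_expand]
    refine Finset.sum_congr rfl fun h _ => ?_
    rw [Finset.prod_mul_distrib]
  -- define pieces
  set E : (Fin r → Fin r × Fin r) → ℂ :=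
    fun h => (Matrix.of fun i k => B' (h i).1 (h i).2 i k).det with hE
  -- big reorganization
  have key : ∑ f : Equiv.Perm (Fin r), ∑ g : Equiv.Perm (Fin r),
      ((Equiv.Perm.sign f : ℤ) : ℂ) * ((Equiv.Perm.sign g : ℤ) : ℂ) *
        (Matrix.of fun i k => Bt (f i) (g i) i k).det
      = ∑ h : Fin r → Fin r × Fin r,
          ((starRingEnd ℂ) ((C₂.submatrix id (fun i => (h i).1)).det)) *
            ((C₂.submatrix id (fun i => (h i).2)).det * E h) := by
    calc ∑ f : Equiv.Perm (Fin r), ∑ g : Equiv.Perm (Fin r),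
        ((Equiv.Perm.sign f : ℤ) : ℂ) * ((Equiv.Perm.sign g : ℤ) : ℂ) *
          (Matrix.of fun i k => Bt (f i) (g i) i k).det
        = ∑ f : Equiv.Perm (Fin r), ∑ g : Equiv.Perm (Fin r),
            ∑ h : Fin r → Fin r × Fin r,
              (((Equiv.Perm.sign f : ℤ) : ℂ) * ∏ i, (starRingEnd ℂ) (C₂ (f i) (h i).1)) *
                ((((Equiv.Perm.sign g : ℤ) : ℂ) * ∏ i, C₂ (g i) (h i).2) * E h) := by
          refine Finset.sum_congr rfl fun f _ => Finset.sum_congr rfl fun g _ => ?_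
          rw [hΔ f g, Finset.mul_sum]
          exact Finset.sum_congr rfl fun h _ => by ring
      _ = ∑ h : Fin r → Fin r × Fin r,
            ∑ f : Equiv.Perm (Fin r), ∑ g : Equiv.Perm (Fin r),
              (((Equiv.Perm.sign f : ℤ) : ℂ) * ∏ i, (starRingEnd ℂ) (C₂ (f i) (h i).1)) *
                ((((Equiv.Perm.sign g : ℤ) : ℂ) * ∏ i, C₂ (g i) (h i).2) * E h) := by
          exact (Finset.sum_congr rfl fun f _ => Finset.sum_comm).trans Finset.sum_comm
      _ = ∑ h : Fin r → Fin r × Fin r,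
            ((starRingEnd ℂ) ((C₂.submatrix id (fun i => (h i).1)).det)) *
              ((C₂.submatrix id (fun i => (h i).2)).det * E h) := by
          refine Finset.sum_congr rfl fun h _ => ?_
          rw [← Fintype.sum_mul_sum
            (fun f : Equiv.Perm (Fin r) =>
              ((Equiv.Perm.sign f : ℤ) : ℂ) * ∏ i, (starRingEnd ℂ) (C₂ (f i) (h i).1))
            (fun g : Equiv.Perm (Fin r) =>
              (((Equiv.Perm.sign g : ℤ) : ℂ) * ∏ i, C₂ (g i) (h i).2) * E h)]
          rw [col_det_conj]
          congr 1
          rw [← Finset.sum_mul, col_det]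
  rw [key]
  -- convert the sum over `h` into a double sum over pairs of functions
  have split : ∑ h : Fin r → Fin r × Fin r,
      ((starRingEnd ℂ) ((C₂.submatrix id (fun i => (h i).1)).det)) *
        ((C₂.submatrix id (fun i => (h i).2)).det * E h)
      = ∑ m₁ : Fin r → Fin r, ∑ m₂ : Fin r → Fin r,
          ((starRingEnd ℂ) ((C₂.submatrix id m₁).det)) *
            ((C₂.submatrix id m₂).det *
              (Matrix.of fun i k => B' (m₁ i) (m₂ i) i k).det) := by
    calc ∑ h : Fin r → Fin r × Fin r,
        ((starRingEnd ℂ) ((C₂.submatrix id (fun i => (h i).1)).det)) *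
          ((C₂.submatrix id (fun i => (h i).2)).det * E h)
        = ∑ m : (Fin r → Fin r) × (Fin r → Fin r),
            ((starRingEnd ℂ) ((C₂.submatrix id m.1).det)) *
              ((C₂.submatrix id m.2).det *
                (Matrix.of fun i k => B' (m.1 i) (m.2 i) i k).det) :=
          Fintype.sum_equiv (Equiv.arrowProdEquivProdArrow (Fin r) (fun _ => Fin r) (fun _ => Fin r)) _ _
            fun h => rfl
      _ = _ := by exact Fintype.sum_prod_type _
  rw [split]
  -- kill non-bijective terms, reduce to permutations
  have hconjsgn : ∀ σ : Equiv.Perm (Fin r),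
      (starRingEnd ℂ) (((Equiv.Perm.sign σ : ℤ) : ℂ)) = ((Equiv.Perm.sign σ : ℤ) : ℂ) := by
    intro σ; simp
  have perm1 : ∑ m₁ : Fin r → Fin r, ∑ m₂ : Fin r → Fin r,
      ((starRingEnd ℂ) ((C₂.submatrix id m₁).det)) *
        ((C₂.submatrix id m₂).det *
          (Matrix.of fun i k => B' (m₁ i) (m₂ i) i k).det)
      = ∑ p : Equiv.Perm (Fin r), ∑ q : Equiv.Perm (Fin r),
          ((starRingEnd ℂ) ((C₂.submatrix id ⇑p).det)) *
            ((C₂.submatrix id ⇑q).det *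
              (Matrix.of fun i k => B' (p i) (q i) i k).det) := by
    rw [sum_fun_eq_sum_perm _ (fun m₁ hm₁ => ?_)]
    · refine Finset.sum_congr rfl fun p _ => ?_
      exact sum_fun_eq_sum_perm _ (fun m₂ hm₂ => by
        rw [col_det_vanish C₂ m₂ (fun hinj => hm₂ hinj.bijective_of_finite), zero_mul, mul_zero])
    · have : (C₂.submatrix id m₁).det = 0 :=
        col_det_vanish C₂ m₁ (fun hinj => hm₁ hinj.bijective_of_finite)
      simp [this]
  rw [perm1]
  -- evaluate the determinants of column-permuted matrices
  have perm2 : ∀ p q : Equiv.Perm (Fin r),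
      ((starRingEnd ℂ) ((C₂.submatrix id ⇑p).det)) *
        ((C₂.submatrix id ⇑q).det *
          (Matrix.of fun i k => B' (p i) (q i) i k).det)
      = ((starRingEnd ℂ) d₂ * d₂) *
          (((Equiv.Perm.sign p : ℤ) : ℂ) * ((Equiv.Perm.sign q : ℤ) : ℂ) *
            (Matrix.of fun i k => B' (p i) (q i) i k).det) := by
    intro p q
    rw [Matrix.det_permute', Matrix.det_permute', _root_.map_mul, hconjsgn]
    ring
  rw [Finset.sum_congr rfl fun p _ => Finset.sum_congr rfl fun q _ => perm2 p q]
  -- pull out the scalar and use C0 backwards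
  have pull : ∑ p : Equiv.Perm (Fin r), ∑ q : Equiv.Perm (Fin r),
      ((starRingEnd ℂ) d₂ * d₂) *
        (((Equiv.Perm.sign p : ℤ) : ℂ) * ((Equiv.Perm.sign q : ℤ) : ℂ) *
          (Matrix.of fun i k => B' (p i) (q i) i k).det)
      = ((starRingEnd ℂ) d₂ * d₂) *
          ∑ p : Equiv.Perm (Fin r), ∑ q : Equiv.Perm (Fin r),
            (((Equiv.Perm.sign p : ℤ) : ℂ) * ((Equiv.Perm.sign q : ℤ) : ℂ) *
              (Matrix.of fun i k => B' (p i) (q i) i k).det) := by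
    rw [Finset.mul_sum]
    exact Finset.sum_congr rfl fun p _ => by rw [Finset.mul_sum]
  rw [pull]
  have back := C0 B'
  have hBinner : ∀ σ : Equiv.Perm (Fin r),
      mixedDisc (fun i => B' i (σ i))
        = d₁ * (starRingEnd ℂ) d₁ * mixedDisc (fun i => B i (σ i)) := by
    intro σ
    have := mixedDisc_mul C₁ C₁.conjTranspose (fun i => B i (σ i))
    rw [Matrix.det_conjTranspose] at this
    exact this
  have habs : ∀ z : ℂ, (((‖z‖ : ℝ) : ℂ))^2 = z * (starRingEnd ℂ) z := by
    intro z
    rw [show (((‖z‖ : ℝ) : ℂ))^2 = ((‖z‖ ^ 2 : ℝ) : ℂ) by push_cast; ring,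
      Complex.sq_norm, Complex.mul_conj]
  calc (1 / (Nat.factorial r : ℂ)) *
        (((starRingEnd ℂ) d₂ * d₂) *
          ∑ p : Equiv.Perm (Fin r), ∑ q : Equiv.Perm (Fin r),
            (((Equiv.Perm.sign p : ℤ) : ℂ) * ((Equiv.Perm.sign q : ℤ) : ℂ) *
              (Matrix.of fun i k => B' (p i) (q i) i k).det))
      = ((starRingEnd ℂ) d₂ * d₂) *
          ((1 / (Nat.factorial r : ℂ)) *
            ∑ p : Equiv.Perm (Fin r), ∑ q : Equiv.Perm (Fin r),
              (((Equiv.Perm.sign p : ℤ) : ℂ) * ((Equiv.Perm.sign q : ℤ) : ℂ) *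
                (Matrix.of fun i k => B' (p i) (q i) i k).det)) := by ring
    _ = ((starRingEnd ℂ) d₂ * d₂) *
          ∑ σ : Equiv.Perm (Fin r),
            ((Equiv.Perm.sign σ : ℤ) : ℂ) * mixedDisc (fun i => B' i (σ i)) := by
        rw [back]
    _ = ((starRingEnd ℂ) d₂ * d₂) * (d₁ * (starRingEnd ℂ) d₁) *
          ∑ σ : Equiv.Perm (Fin r),
            ((Equiv.Perm.sign σ : ℤ) : ℂ) * mixedDisc (fun i => B i (σ i)) := by
        rw [Finset.sum_congr rfl fun σ _ => by rw [hBinner σ]]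
        rw [Finset.mul_sum, Finset.mul_sum]
        exact Finset.sum_congr rfl fun σ _ => by ring
    _ = (((‖d₁‖ : ℝ) : ℂ)) ^ 2 * (((‖d₂‖ : ℝ) : ℂ)) ^ 2 *
          ((1 / (Nat.factorial r : ℂ)) *
            ∑ f : Equiv.Perm (Fin r), ∑ g : Equiv.Perm (Fin r),
              ((Equiv.Perm.sign f : ℤ) : ℂ) * ((Equiv.Perm.sign g : ℤ) : ℂ) *
                (Matrix.of fun i k => B (f i) (g i) i k).det) := by
        rw [← C0 B, habs d₁, habs d₂]
        ring
end
end

section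
/- Let r ≥ 1 and let B_{ij} ∈ M_r(ℂ) (1 ≤ i,j ≤ r) be arbitrary matrices. Define the dual family A_{pq} ∈ M_r(ℂ) (1 ≤ p,q ≤ r) by (A_{pq})_{ij} := (B_{ij})_{pq}. Then Σ_{σ∈S_r} sgn(σ)·D(B_{1σ(1)},…,B_{rσ(r)}) = Σ_{σ∈S_r} sgn(σ)·D(A_{1σ(1)},…,A_{rσ(r)}). -/
open scoped BigOperators

noncomputable section

/-- Expansion of `∑ σ, sgn σ * D(C₁σ(1),…,C_rσ(r))` as a triple sum over permutations. -/
lemma expand_aux {r : ℕ} (C : Fin r → Fin r → Matrix (Fin r) (Fin r) ℂ) :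
    (∑ σ : Equiv.Perm (Fin r), ((Equiv.Perm.sign σ : ℤ) : ℂ) * mixedDisc (fun i => C i (σ i)))
      = (1 / (Nat.factorial r : ℂ)) *
        ∑ x : Equiv.Perm (Fin r) × Equiv.Perm (Fin r) × Equiv.Perm (Fin r),
          ((Equiv.Perm.sign x.1 : ℤ) : ℂ) * ((Equiv.Perm.sign x.2.2 : ℤ) : ℂ) *
            ∏ i, C (x.2.1 (x.2.2 i)) (x.1 (x.2.1 (x.2.2 i))) (x.2.2 i) i := by
  simp only [mixedDisc, Matrix.det_apply', Matrix.of_apply, Fintype.sum_prod_type,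
    Finset.mul_sum, Finset.sum_mul]
  refine Finset.sum_congr rfl fun σ _ => Finset.sum_congr rfl fun τ _ => ?_
  refine Finset.sum_congr rfl fun π _ => ?_
  ring

/-- for arbitrary `B i j ∈ M_r(ℂ)`, defining the dual family
`(A_{pq})_{ij} := (B_{ij})_{pq}`, one has
`∑_σ sgn σ · D(B₁σ(1),…,B_rσ(r)) = ∑_σ sgn σ · D(A₁σ(1),…,A_rσ(r))`. -/
theorem stmt16 (r : ℕ) (hr : 1 ≤ r) (B : Fin r → Fin r → Matrix (Fin r) (Fin r) ℂ)
    (A : Fin r → Fin r → Matrix (Fin r) (Fin r) ℂ)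
    (hA : ∀ p q i j, A p q i j = B i j p q) :
    ∑ σ : Equiv.Perm (Fin r),
        ((Equiv.Perm.sign σ : ℤ) : ℂ) * mixedDisc (fun i => B i (σ i))
      = ∑ σ : Equiv.Perm (Fin r),
        ((Equiv.Perm.sign σ : ℤ) : ℂ) * mixedDisc (fun p => A p (σ p)) := by
  rw [expand_aux B, expand_aux A]
  congr 1
  refine Fintype.sum_equiv
    ⟨fun x => (x.2.2⁻¹, x.2.1⁻¹, x.1⁻¹), fun x => (x.2.2⁻¹, x.2.1⁻¹, x.1⁻¹),
      fun x => by simp, fun x => by simp⟩ _ _ fun x => ?_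
  obtain ⟨σ, τ, π⟩ := x
  simp only [Equiv.coe_fn_mk, Equiv.Perm.sign_inv]
  rw [mul_comm (((Equiv.Perm.sign π : ℤ) : ℂ)) (((Equiv.Perm.sign σ : ℤ) : ℂ))]
  congr 1
  have := Equiv.prod_comp ((π.trans τ).trans σ)
    (fun j => B (σ⁻¹ j) j (τ⁻¹ (σ⁻¹ j)) (π⁻¹ (τ⁻¹ (σ⁻¹ j))))
  simp only [Equiv.trans_apply, (show ∀ (e : Equiv.Perm (Fin r)) x, e⁻¹ (e x) = x from fun e x => e.symm_apply_apply x)] at this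
  rw [this]
  refine Finset.prod_congr rfl fun j _ => ?_
  rw [hA]
end
end
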